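/- Let X be a real normed space. There exists a map r from the collection of nonempty subsets of X with at most 3 elements to the collection of nonempty subsets of X with at most 2 elements such that r(x) = x whenever x has at most 2 elements, and d_H(r(x), r(y)) ≤ 731·d_H(x, y) for all nonempty x, y ⊆ X with at most 3 elements; i.e., there is a Lipschitz retraction X(3) → X(2) with Lipschitz constant 731. -/

import Mathlib

set_option linter.unusedSectionVars false
set_option maxHeartbeats 1000000

open Metric Set

namespace Stmt7

variable {X : Type*} [NormedAddCommGroup X] [NormedSpace ℝ X]

noncomputable def tv (a b c : X) : ℝ :=
  max 0 (min 1 ((2 * min (dist a c) (dist b c) - 2 * dist a b) / max (dist a c) (dist b c)))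

noncomputable def ctr (a b c : X) : X := (3:ℝ)⁻¹ • (a + b + c)

noncomputable def mp (a b : X) : X := (2:ℝ)⁻¹ • (a + b)

noncomputable def out (a b c : X) : Set X :=
  {ctr a b c + tv a b c • (mp a b - ctr a b c), ctr a b c + tv a b c • (c - ctr a b c)}

def sorted (a b c : X) : Prop := dist a b ≤ dist a c ∧ dist a b ≤ dist b c

lemma tv_nonneg (a b c : X) : 0 ≤ tv a b c := le_max_left _ _

lemma tv_le_one (a b c : X) : tv a b c ≤ 1 :=
  max_le (by norm_num) (min_le_left _ _)

lemma tv_eq_one {a b c : X} (hl : 0 < max (dist a c) (dist b c))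
    (h : max (dist a c) (dist b c) ≤ 2 * min (dist a c) (dist b c) - 2 * dist a b) :
    tv a b c = 1 := by
  have h1 : (1:ℝ) ≤ (2 * min (dist a c) (dist b c) - 2 * dist a b) / max (dist a c) (dist b c) :=
    (one_le_div hl).2 h
  simp [tv, min_eq_left h1]

lemma tv_le {a b c : X} (hl : 0 < max (dist a c) (dist b c))
    (hs : dist a b ≤ min (dist a c) (dist b c)) :
    tv a b c ≤ (2 * min (dist a c) (dist b c) - 2 * dist a b) / max (dist a c) (dist b c) :=
  max_le (div_nonneg (by linarith) hl.le) (min_le_right _ _)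

lemma out_nonempty (a b c : X) : (out a b c).Nonempty := ⟨_, Or.inl rfl⟩

lemma out_encard (a b c : X) : (out a b c).encard ≤ 2 := by
  apply le_trans (Set.encard_insert_le _ _)
  rw [Set.encard_singleton]
  rfl

lemma ctr_comm (a b c : X) : ctr a b c = ctr b a c := by simp only [ctr]; module

lemma mp_comm (a b : X) : mp a b = mp b a := by simp only [mp]; module

lemma mp_self (a : X) : mp a a = a := by simp only [mp]; module

lemma out_comm (a b c : X) : out a b c = out b a c := by
  have h1 : tv a b c = tv b a c := by
    simp [tv, dist_comm, min_comm (dist a c) (dist b c), max_comm (dist a c) (dist b c)]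
  simp [out, h1, ctr_comm a b c, mp_comm a b]

lemma out_of_t1 {a b c : X} (h : tv a b c = 1) : out a b c = {mp a b, c} := by
  simp [out, h]

lemma dist_mp_le (a b a' b' : X) : dist (mp a b) (mp a' b') ≤ (dist a a' + dist b b') / 2 := by
  have h : mp a b - mp a' b' = (2:ℝ)⁻¹ • ((a - a') + (b - b')) := by simp only [mp]; module
  rw [dist_eq_norm, h, norm_smul]
  simp only [dist_eq_norm]
  have := norm_add_le (a - a') (b - b')
  rw [Real.norm_eq_abs, abs_of_nonneg (by norm_num : (0:ℝ) ≤ (2:ℝ)⁻¹)]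
  linarith

lemma dist_mp_left (a b : X) : dist (mp a b) a ≤ dist a b / 2 := by
  have h : mp a b - a = (2:ℝ)⁻¹ • (b - a) := by simp only [mp]; module
  rw [dist_eq_norm, h, norm_smul, Real.norm_eq_abs,
    abs_of_nonneg (by norm_num : (0:ℝ) ≤ (2:ℝ)⁻¹), dist_eq_norm, norm_sub_rev]
  linarith

lemma dist_ctr_le (a b c a' b' c' : X) :
    dist (ctr a b c) (ctr a' b' c') ≤ (dist a a' + dist b b' + dist c c') / 3 := by
  have h : ctr a b c - ctr a' b' c' = (3:ℝ)⁻¹ • ((a - a') + (b - b') + (c - c')) := by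
    simp only [ctr]; module
  rw [dist_eq_norm, h, norm_smul]
  simp only [dist_eq_norm]
  have h1 := norm_add_le (a - a' + (b - b')) (c - c')
  have h2 := norm_add_le (a - a') (b - b')
  rw [Real.norm_eq_abs, abs_of_nonneg (by norm_num : (0:ℝ) ≤ (3:ℝ)⁻¹)]
  linarith

lemma norm_mp_sub_ctr (a b c : X) :
    ‖mp a b - ctr a b c‖ ≤ (dist a c + dist b c) / 6 := by
  have h : mp a b - ctr a b c = (6:ℝ)⁻¹ • ((a - c) + (b - c)) := by simp only [mp, ctr]; module
  rw [h, norm_smul, Real.norm_eq_abs, abs_of_nonneg (by norm_num : (0:ℝ) ≤ (6:ℝ)⁻¹)]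
  have := norm_add_le (a - c) (b - c)
  simp only [dist_eq_norm]
  linarith

lemma norm_c_sub_ctr (a b c : X) :
    ‖c - ctr a b c‖ ≤ (dist a c + dist b c) / 3 := by
  have h : c - ctr a b c = (3:ℝ)⁻¹ • ((c - a) + (c - b)) := by simp only [ctr]; module
  rw [h, norm_smul, Real.norm_eq_abs, abs_of_nonneg (by norm_num : (0:ℝ) ≤ (3:ℝ)⁻¹)]
  have := norm_add_le (c - a) (c - b)
  rw [dist_comm a c, dist_comm b c]
  simp only [dist_eq_norm]
  linarith

lemma norm_ctr_sub (a b c : X) :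
    ‖ctr a b c - a‖ ≤ (dist a b + dist a c) / 3 := by
  have h : ctr a b c - a = (3:ℝ)⁻¹ • ((b - a) + (c - a)) := by simp only [ctr]; module
  rw [h, norm_smul, Real.norm_eq_abs, abs_of_nonneg (by norm_num : (0:ℝ) ≤ (3:ℝ)⁻¹)]
  have := norm_add_le (b - a) (c - a)
  rw [dist_comm a b, dist_comm a c]
  simp only [dist_eq_norm]
  linarith

lemma dist_aff (g g' w w' : X) (t t' : ℝ) :
    dist (g + t • w) (g' + t' • w') ≤ dist g g' + |t - t'| * ‖w‖ + |t'| * ‖w - w'‖ := by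
  have h : (g + t • w) - (g' + t' • w') = (g - g') + ((t - t') • w + t' • (w - w')) := by module
  rw [dist_eq_norm, h]
  have h1 := norm_add_le (g - g') ((t - t') • w + t' • (w - w'))
  have h2 := norm_add_le ((t - t') • w) (t' • (w - w'))
  rw [norm_smul, norm_smul, Real.norm_eq_abs, Real.norm_eq_abs] at h2
  rw [dist_eq_norm]
  linarith

lemma dist_conv_le (g w z : X) (t : ℝ) (h0 : 0 ≤ t) (h1 : t ≤ 1) :
    dist (g + t • (w - g)) z ≤ (1 - t) * dist g z + t * dist w z := by
  have h : (g + t • (w - g)) - z = (1 - t) • (g - z) + t • (w - z) := by module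
  rw [dist_eq_norm, h]
  have h2 := norm_add_le ((1 - t) • (g - z)) (t • (w - z))
  rw [norm_smul, norm_smul, Real.norm_eq_abs, Real.norm_eq_abs,
    abs_of_nonneg (by linarith), abs_of_nonneg h0] at h2
  simp only [dist_eq_norm]
  linarith

lemma clamp_lip (p q : ℝ) : |max 0 (min 1 p) - max 0 (min 1 q)| ≤ |p - q| := by
  have h1 : |max 0 (min 1 p) - max 0 (min 1 q)| ≤ |min 1 p - min 1 q| := by
    rw [max_comm 0 (min 1 p), max_comm 0 (min 1 q)]
    exact abs_max_sub_max_le_abs _ _ _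
  have h2 : |min 1 p - min 1 q| ≤ max |(1:ℝ) - 1| |p - q| := abs_min_sub_min_le_max 1 p 1 q
  simp at h2
  linarith

lemma num_bound {d s m l s' m' l' : ℝ} (hd : 0 ≤ d) (hl : 200 * d < l)
    (hs : 0 ≤ s) (hsm : s ≤ m) (hml : m ≤ l)
    (hs' : 0 ≤ s') (hsm' : s' ≤ m') (hml' : m' ≤ l')
    (es : |s - s'| ≤ 2 * d) (em : |m - m'| ≤ 2 * d) (el : |l - l'| ≤ 2 * d) :
    |(2 * m - 2 * s) * l' - (2 * m' - 2 * s') * l| ≤ 24 * d * l' := by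
  obtain ⟨es1, es2⟩ := abs_le.mp es
  obtain ⟨em1, em2⟩ := abs_le.mp em
  obtain ⟨el1, el2⟩ := abs_le.mp el
  have hl0 : 0 < l := by linarith
  have hl0' : 0 < l' := by linarith
  have h2l : l ≤ 2 * l' := by linarith
  rw [abs_le]
  constructor
  · nlinarith [mul_nonneg (by linarith : (0:ℝ) ≤ 2*m - 2*s) (by linarith : (0:ℝ) ≤ l - l' + 2*d),
      mul_nonneg hd hl0.le, mul_nonneg hd hl0'.le,
      mul_nonneg (by linarith : (0:ℝ) ≤ 2*(m'-m) + 2*(s-s') + 8*d) hl0.le]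
  · nlinarith [mul_nonneg (by linarith : (0:ℝ) ≤ 2*m - 2*s) (by linarith : (0:ℝ) ≤ l' - l + 2*d),
      mul_nonneg hd hl0.le, mul_nonneg hd hl0'.le,
      mul_nonneg (by linarith : (0:ℝ) ≤ 2*(m-m') + 2*(s'-s) + 8*d) hl0.le]

lemma clamp_div_diff {d s m l s' m' l' : ℝ} (hd : 0 ≤ d) (hl : 200 * d < l)
    (hs : 0 ≤ s) (hsm : s ≤ m) (hml : m ≤ l)
    (hs' : 0 ≤ s') (hsm' : s' ≤ m') (hml' : m' ≤ l')
    (es : |s - s'| ≤ 2 * d) (em : |m - m'| ≤ 2 * d) (el : |l - l'| ≤ 2 * d) :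
    |max 0 (min 1 ((2 * m - 2 * s) / l)) - max 0 (min 1 ((2 * m' - 2 * s') / l'))| * l ≤ 24 * d := by
  obtain ⟨el1, el2⟩ := abs_le.mp el
  have hl0 : 0 < l := by linarith
  have hl0' : 0 < l' := by linarith
  have h1 := clamp_lip ((2 * m - 2 * s) / l) ((2 * m' - 2 * s') / l')
  have h2 : (2 * m - 2 * s) / l - (2 * m' - 2 * s') / l' =
      ((2 * m - 2 * s) * l' - (2 * m' - 2 * s') * l) / (l * l') := by
    field_simp
  have h3 := num_bound hd hl hs hsm hml hs' hsm' hml' es em el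
  have h4 : |(2 * m - 2 * s) / l - (2 * m' - 2 * s') / l'| ≤ 24 * d / l := by
    rw [h2, abs_div, abs_of_pos (mul_pos hl0 hl0')]
    rw [div_le_div_iff₀ (mul_pos hl0 hl0') hl0]
    calc |(2 * m - 2 * s) * l' - (2 * m' - 2 * s') * l| * l ≤ (24 * d * l') * l := by
          apply mul_le_mul_of_nonneg_right h3 hl0.le
      _ = 24 * d * (l * l') := by ring
  calc |max 0 (min 1 ((2 * m - 2 * s) / l)) - max 0 (min 1 ((2 * m' - 2 * s') / l'))| * l
      ≤ (24 * d / l) * l := mul_le_mul_of_nonneg_right (le_trans h1 h4) hl0.le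
    _ = 24 * d := by field_simp


lemma hd_pair {U V U' V' : X} {e : ℝ} (he : 0 ≤ e) (h1 : dist U U' ≤ e) (h2 : dist V V' ≤ e) :
    hausdorffDist ({U, V} : Set X) {U', V'} ≤ e := by
  apply hausdorffDist_le_of_mem_dist he
  · intro z hz
    simp only [Set.mem_insert_iff, Set.mem_singleton_iff] at hz
    rcases hz with rfl | rfl
    · exact ⟨U', by simp, h1⟩
    · exact ⟨V', by simp, h2⟩
  · intro z hz
    simp only [Set.mem_insert_iff, Set.mem_singleton_iff] at hz
    rcases hz with rfl | rfl
    · exact ⟨U, by simp, by rwa [dist_comm]⟩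
    · exact ⟨V, by simp, by rwa [dist_comm]⟩

lemma hd_pair_cross {U V U' V' : X} {e : ℝ} (he : 0 ≤ e) (h1 : dist U V' ≤ e) (h2 : dist V U' ≤ e) :
    hausdorffDist ({U, V} : Set X) {U', V'} ≤ e := by
  rw [Set.pair_comm U' V']
  exact hd_pair he h1 h2

lemma fin_ne_top {x y : Set X} (hx : x.Finite) (hy : y.Finite) (hxne : x.Nonempty)
    (hyne : y.Nonempty) : EMetric.hausdorffEdist x y ≠ ⊤ :=
  hausdorffEdist_ne_top_of_nonempty_of_bounded hxne hyne hx.isBounded hy.isBounded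

lemma exists_close {x y : Set X} (hx : x.Finite) (hy : y.Finite) (hxne : x.Nonempty)
    (hyne : y.Nonempty) {u : X} (hu : u ∈ x) :
    ∃ v ∈ y, dist u v ≤ hausdorffDist x y := by
  have h1 : infDist u y ≤ hausdorffDist x y :=
    infDist_le_hausdorffDist_of_mem hu (fin_ne_top hx hy hxne hyne)
  obtain ⟨v, hv, hd⟩ := hy.isCompact.exists_infDist_eq_dist hyne u
  exact ⟨v, hv, by rw [← hd]; exact h1⟩

lemma exists_sorted3 {x : Set X} (h : x.encard = 3) :
    ∃ p : X × X × X, x = {p.1, p.2.1, p.2.2} ∧ sorted p.1 p.2.1 p.2.2 := by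
  obtain ⟨u, v, w, huv, huw, hvw, rfl⟩ := Set.encard_eq_three.mp h
  rcases le_total (dist u v) (dist u w) with h1 | h1
  · rcases le_total (dist u v) (dist v w) with h2 | h2
    · exact ⟨(u, v, w), rfl, h1, h2⟩
    · refine ⟨(v, w, u), by ext z; simp; tauto, ?_, ?_⟩
      · rw [dist_comm v u]; exact h2
      · rw [dist_comm w u]; exact le_trans h2 h1
  · rcases le_total (dist u w) (dist v w) with h2 | h2
    · refine ⟨(u, w, v), by ext z; simp; tauto, h1, ?_⟩
      rw [dist_comm w v]; exact h2
    · refine ⟨(v, w, u), by ext z; simp; tauto, ?_, ?_⟩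
      · rw [dist_comm v u]; exact le_trans h2 h1
      · rw [dist_comm w u]; exact h2

noncomputable def rmap (x : Set X) : Set X :=
  if h : x.encard = 3 then
    out (exists_sorted3 h).choose.1 (exists_sorted3 h).choose.2.1 (exists_sorted3 h).choose.2.2
  else x

lemma rmap_eq_self {x : Set X} (h : x.encard ≤ 2) : rmap x = x := by
  rw [rmap, dif_neg]
  intro hh
  rw [hh] at h
  exact absurd h (by decide)

lemma out_degen2 {u v : X} (huv : u ≠ v) : out u u v = {u, v} := by
  have hD : 0 < dist u v := dist_pos.mpr huv
  have h1 : tv u u v = 1 := by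
    apply tv_eq_one (by simpa using hD)
    simp [dist_self]
    linarith
  rw [out_of_t1 h1, mp_self]

lemma out_degen1 (u : X) : out u u u = {u} := by
  have h1 : ctr u u u = u := by simp only [ctr]; module
  have h2 : tv u u u = 0 := by simp [tv, dist_self]
  simp [out, h1, h2]

lemma rmap_spec {x : Set X} (hne : x.Nonempty) (h3 : x.encard ≤ 3) :
    ∃ a b c : X, x = {a, b, c} ∧ sorted a b c ∧ rmap x = out a b c := by
  rcases eq_or_ne x.encard 3 with h | h
  · obtain ⟨hset, hsort⟩ := (exists_sorted3 h).choose_spec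
    exact ⟨_, _, _, hset, hsort, by rw [rmap, dif_pos h]⟩
  · have hle : x.encard ≤ 2 := by
      have hne3 : x.encard ≠ ⊤ := ne_top_of_le_ne_top (by decide) h3
      lift x.encard to ℕ using hne3 with n hn
      rcases h3.lt_or_eq with hlt | heq
      · exact_mod_cast Order.le_of_lt_add_one (by exact_mod_cast hlt)
      · exact absurd heq h
    have hr : rmap x = x := rmap_eq_self hle
    rcases eq_or_ne x.encard 2 with h2 | h2
    · obtain ⟨u, v, huv, rfl⟩ := Set.encard_eq_two.mp h2
      refine ⟨u, u, v, by simp, ?_, ?_⟩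
      · exact ⟨by simp [dist_self, dist_nonneg], by simp [dist_self, dist_nonneg]⟩
      · rw [hr, out_degen2 huv]
    · have h1 : x.encard = 1 := by
        have h0 : x.encard ≠ 0 := by
          rw [Set.encard_ne_zero]
          exact hne
        have hne3' : x.encard ≠ ⊤ := ne_top_of_le_ne_top (by decide) h3
        lift x.encard to ℕ using hne3' with n hn
        have c2 : n ≠ 2 := by exact_mod_cast h2
        have c0 : n ≠ 0 := by exact_mod_cast h0
        have cle : n ≤ 2 := by exact_mod_cast hle
        have : n = 1 := by omega
        exact_mod_cast this
      obtain ⟨u, rfl⟩ := Set.encard_eq_one.mp h1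
      refine ⟨u, u, u, by simp, ?_, ?_⟩
      · constructor <;> simp [dist_self]
      · rw [hr, out_degen1]


lemma out_close {a b c : X} (h : sorted a b c) :
    hausdorffDist (out a b c) ({a, b, c} : Set X) ≤ max (dist a c) (dist b c) := by
  obtain ⟨h1, h2⟩ := h
  set l := max (dist a c) (dist b c) with hl
  have hac : dist a c ≤ l := le_max_left _ _
  have hbc : dist b c ≤ l := le_max_right _ _
  have hle : 0 ≤ l := le_trans dist_nonneg hac
  have ht0 : 0 ≤ tv a b c := tv_nonneg a b c
  have ht1 : tv a b c ≤ 1 := tv_le_one a b c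
  have dGa : dist (ctr a b c) a ≤ 2 * l / 3 := by
    rw [dist_eq_norm]
    have := norm_ctr_sub a b c
    linarith
  have dGb : dist (ctr a b c) b ≤ 2 * l / 3 := by
    rw [ctr_comm, dist_eq_norm]
    have := norm_ctr_sub b a c
    rw [dist_comm b a] at this
    linarith
  have dGc : dist (ctr a b c) c ≤ 2 * l / 3 := by
    rw [dist_comm, dist_eq_norm]
    have := norm_c_sub_ctr a b c
    linarith
  have dMa : dist (mp a b) a ≤ l / 2 := le_trans (dist_mp_left a b) (by linarith)
  have dU : dist (ctr a b c + tv a b c • (mp a b - ctr a b c)) a ≤ l := by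
    have := dist_conv_le (ctr a b c) (mp a b) a (tv a b c) ht0 ht1
    nlinarith
  have dVa : dist (ctr a b c + tv a b c • (c - ctr a b c)) a ≤ l := by
    have := dist_conv_le (ctr a b c) c a (tv a b c) ht0 ht1
    rw [dist_comm c a] at this
    nlinarith
  have dVb : dist (ctr a b c + tv a b c • (c - ctr a b c)) b ≤ l := by
    have := dist_conv_le (ctr a b c) c b (tv a b c) ht0 ht1
    rw [dist_comm c b] at this
    nlinarith
  have dVc : dist (ctr a b c + tv a b c • (c - ctr a b c)) c ≤ l := by
    have := dist_conv_le (ctr a b c) c c (tv a b c) ht0 ht1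
    simp only [dist_self] at this
    nlinarith
  apply hausdorffDist_le_of_mem_dist hle
  · intro z hz
    simp only [out, Set.mem_insert_iff, Set.mem_singleton_iff] at hz
    rcases hz with rfl | rfl
    · exact ⟨a, by simp, dU⟩
    · exact ⟨a, by simp, dVa⟩
  · intro z hz
    simp only [Set.mem_insert_iff, Set.mem_singleton_iff] at hz
    rcases hz with rfl | rfl | rfl
    · exact ⟨_, Or.inr rfl, by rw [dist_comm]; exact dVa⟩
    · exact ⟨_, Or.inr rfl, by rw [dist_comm]; exact dVb⟩
    · exact ⟨_, Or.inr rfl, by rw [dist_comm]; exact dVc⟩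

lemma core {a b c a' b' c' : X} {d : ℝ} (h : sorted a b c) (h' : sorted a' b' c')
    (hl : 200 * d < max (dist a c) (dist b c))
    (e1 : dist a a' ≤ d) (e2 : dist b b' ≤ d) (e3 : dist c c' ≤ d) :
    hausdorffDist (out a b c) (out a' b' c') ≤ 19 * d := by
  have hd0 : 0 ≤ d := le_trans dist_nonneg e1
  have es : |dist a b - dist a' b'| ≤ 2 * d := by
    have := dist_dist_dist_le a b a' b'
    rw [Real.dist_eq] at this
    linarith
  have eac : |dist a c - dist a' c'| ≤ 2 * d := by
    have := dist_dist_dist_le a c a' c'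
    rw [Real.dist_eq] at this
    linarith
  have ebc : |dist b c - dist b' c'| ≤ 2 * d := by
    have := dist_dist_dist_le b c b' c'
    rw [Real.dist_eq] at this
    linarith
  have em : |min (dist a c) (dist b c) - min (dist a' c') (dist b' c')| ≤ 2 * d :=
    le_trans (abs_min_sub_min_le_max _ _ _ _) (max_le eac ebc)
  have el : |max (dist a c) (dist b c) - max (dist a' c') (dist b' c')| ≤ 2 * d :=
    le_trans (abs_max_sub_max_le_max _ _ _ _) (max_le eac ebc)
  have ht : |tv a b c - tv a' b' c'| * max (dist a c) (dist b c) ≤ 24 * d := by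
    have := clamp_div_diff hd0 hl dist_nonneg (le_min h.1 h.2) min_le_max
      dist_nonneg (le_min h'.1 h'.2) min_le_max es em el
    simpa [tv] using this
  set l := max (dist a c) (dist b c) with hldef
  have hl0 : (0:ℝ) < l := by linarith
  have dGG : dist (ctr a b c) (ctr a' b' c') ≤ d :=
    le_trans (dist_ctr_le a b c a' b' c') (by linarith)
  have habs : |tv a' b' c'| ≤ 1 := by
    rw [abs_of_nonneg (tv_nonneg _ _ _)]
    exact tv_le_one _ _ _
  -- U bound
  have hwU : ‖mp a b - ctr a b c‖ ≤ l / 3 := by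
    have := norm_mp_sub_ctr a b c
    have h1 : dist a c ≤ l := le_max_left _ _
    have h2 : dist b c ≤ l := le_max_right _ _
    linarith
  have hwUd : ‖(mp a b - ctr a b c) - (mp a' b' - ctr a' b' c')‖ ≤ 2 * d := by
    have hid : (mp a b - ctr a b c) - (mp a' b' - ctr a' b' c') =
        (mp a b - mp a' b') - (ctr a b c - ctr a' b' c') := by abel
    rw [hid]
    have := norm_sub_le (mp a b - mp a' b') (ctr a b c - ctr a' b' c')
    have hm : ‖mp a b - mp a' b'‖ ≤ d := by
      rw [← dist_eq_norm]
      exact le_trans (dist_mp_le a b a' b') (by linarith)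
    have hg : ‖ctr a b c - ctr a' b' c'‖ ≤ d := by rw [← dist_eq_norm]; exact dGG
    linarith
  have dU : dist (ctr a b c + tv a b c • (mp a b - ctr a b c))
      (ctr a' b' c' + tv a' b' c' • (mp a' b' - ctr a' b' c')) ≤ 19 * d := by
    have haff := dist_aff (ctr a b c) (ctr a' b' c') (mp a b - ctr a b c)
      (mp a' b' - ctr a' b' c') (tv a b c) (tv a' b' c')
    have hterm : |tv a b c - tv a' b' c'| * ‖mp a b - ctr a b c‖ ≤ 8 * d := by
      calc |tv a b c - tv a' b' c'| * ‖mp a b - ctr a b c‖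
          ≤ |tv a b c - tv a' b' c'| * (l / 3) :=
            mul_le_mul_of_nonneg_left hwU (abs_nonneg _)
        _ = (|tv a b c - tv a' b' c'| * l) / 3 := by ring
        _ ≤ 24 * d / 3 := by linarith
        _ = 8 * d := by ring
    have hterm2 : |tv a' b' c'| * ‖(mp a b - ctr a b c) - (mp a' b' - ctr a' b' c')‖ ≤ 2 * d := by
      calc |tv a' b' c'| * ‖(mp a b - ctr a b c) - (mp a' b' - ctr a' b' c')‖
          ≤ 1 * (2 * d) := mul_le_mul habs hwUd (norm_nonneg _) zero_le_one
        _ = 2 * d := by ring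
    linarith
  -- V bound
  have hwV : ‖c - ctr a b c‖ ≤ 2 * l / 3 := by
    have := norm_c_sub_ctr a b c
    have h1 : dist a c ≤ l := le_max_left _ _
    have h2 : dist b c ≤ l := le_max_right _ _
    linarith
  have hwVd : ‖(c - ctr a b c) - (c' - ctr a' b' c')‖ ≤ 2 * d := by
    have hid : (c - ctr a b c) - (c' - ctr a' b' c') =
        (c - c') - (ctr a b c - ctr a' b' c') := by abel
    rw [hid]
    have := norm_sub_le (c - c') (ctr a b c - ctr a' b' c')
    have hm : ‖c - c'‖ ≤ d := by rw [← dist_eq_norm]; exact e3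
    have hg : ‖ctr a b c - ctr a' b' c'‖ ≤ d := by rw [← dist_eq_norm]; exact dGG
    linarith
  have dV : dist (ctr a b c + tv a b c • (c - ctr a b c))
      (ctr a' b' c' + tv a' b' c' • (c' - ctr a' b' c')) ≤ 19 * d := by
    have haff := dist_aff (ctr a b c) (ctr a' b' c') (c - ctr a b c)
      (c' - ctr a' b' c') (tv a b c) (tv a' b' c')
    have hterm : |tv a b c - tv a' b' c'| * ‖c - ctr a b c‖ ≤ 16 * d := by
      calc |tv a b c - tv a' b' c'| * ‖c - ctr a b c‖
          ≤ |tv a b c - tv a' b' c'| * (2 * l / 3) :=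
            mul_le_mul_of_nonneg_left hwV (abs_nonneg _)
        _ = (|tv a b c - tv a' b' c'| * l) * 2 / 3 := by ring
        _ ≤ 24 * d * 2 / 3 := by linarith
        _ = 16 * d := by ring
    have hterm2 : |tv a' b' c'| * ‖(c - ctr a b c) - (c' - ctr a' b' c')‖ ≤ 2 * d := by
      calc |tv a' b' c'| * ‖(c - ctr a b c) - (c' - ctr a' b' c')‖
          ≤ 1 * (2 * d) := mul_le_mul habs hwVd (norm_nonneg _) zero_le_one
        _ = 2 * d := by ring
    linarith
  exact hd_pair (by linarith) dU dV


lemma encard_le_three (u v w : X) : ({u, v, w} : Set X).encard ≤ 3 := by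
  apply le_trans (Set.encard_insert_le _ _)
  have h2 : ({v, w} : Set X).encard ≤ 2 := by
    apply le_trans (Set.encard_insert_le _ _)
    rw [Set.encard_singleton]; rfl
  calc ({v, w} : Set X).encard + 1 ≤ 2 + 1 := by
        exact add_le_add h2 (le_refl 1)
    _ = 3 := by rfl

lemma encard_triple_eq_three {u v w : X} (h1 : u ≠ v) (h2 : u ≠ w) (h3 : v ≠ w) :
    ({u, v, w} : Set X).encard = 3 :=
  Set.encard_eq_three.mpr ⟨u, v, w, h1, h2, h3, rfl⟩

lemma ctr_rot (a b c : X) : ctr a b c = ctr b c a := by simp only [ctr]; module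

lemma out_near_ctr {a b c : X} (h : sorted a b c) (hl : 0 < max (dist a c) (dist b c)) :
    ∀ z ∈ out a b c, dist z (ctr a b c) ≤
      4 / 3 * (min (dist a c) (dist b c) - dist a b) := by
  have hts := tv_le hl (le_min h.1 h.2)
  have ht0 := tv_nonneg a b c
  have hkey : ∀ w : X, ‖w‖ ≤ 2 * max (dist a c) (dist b c) / 3 →
      dist (ctr a b c + tv a b c • w) (ctr a b c) ≤
        4 / 3 * (min (dist a c) (dist b c) - dist a b) := by
    intro w hw
    have h1 : dist (ctr a b c + tv a b c • w) (ctr a b c) = tv a b c * ‖w‖ := by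
      rw [dist_eq_norm, add_sub_cancel_left, norm_smul, Real.norm_eq_abs, abs_of_nonneg ht0]
    rw [h1]
    have h2 : tv a b c * ‖w‖ ≤
        ((2 * min (dist a c) (dist b c) - 2 * dist a b) / max (dist a c) (dist b c)) *
          (2 * max (dist a c) (dist b c) / 3) := by
      apply mul_le_mul hts hw (norm_nonneg _)
      apply div_nonneg _ hl.le
      have := le_min h.1 h.2
      linarith
    have h3 : ((2 * min (dist a c) (dist b c) - 2 * dist a b) / max (dist a c) (dist b c)) *
        (2 * max (dist a c) (dist b c) / 3) =
        4 / 3 * (min (dist a c) (dist b c) - dist a b) := by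
      field_simp
      ring
    linarith
  intro z hz
  simp only [out, Set.mem_insert_iff, Set.mem_singleton_iff] at hz
  rcases hz with rfl | rfl
  · apply hkey
    have := norm_mp_sub_ctr a b c
    have h1 : dist a c ≤ max (dist a c) (dist b c) := le_max_left _ _
    have h2 : dist b c ≤ max (dist a c) (dist b c) := le_max_right _ _
    linarith
  · apply hkey
    have := norm_c_sub_ctr a b c
    have h1 : dist a c ≤ max (dist a c) (dist b c) := le_max_left _ _
    have h2 : dist b c ≤ max (dist a c) (dist b c) := le_max_right _ _
    linarith

lemma ib_case {a b c a' b' c' : X} {d : ℝ} (h : sorted a b c) (h' : sorted a' b' c')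
    (hd0 : 0 ≤ d)
    (hlx : 0 < max (dist a c) (dist b c)) (hly : 0 < max (dist a' c') (dist b' c'))
    (hGG : dist (ctr a b c) (ctr a' b' c') ≤ d)
    (hmx : min (dist a c) (dist b c) - dist a b ≤ 6 * d)
    (hmy : min (dist a' c') (dist b' c') - dist a' b' ≤ 10 * d) :
    hausdorffDist (out a b c) (out a' b' c') ≤ 23 * d := by
  have hx := out_near_ctr h hlx
  have hy := out_near_ctr h' hly
  apply hausdorffDist_le_of_mem_dist (by linarith)
  · intro z hz
    refine ⟨ctr a' b' c' + tv a' b' c' • (c' - ctr a' b' c'), by simp [out], ?_⟩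
    have h1 := hx z hz
    have h2 := hy _ (by simp [out] : ctr a' b' c' + tv a' b' c' • (c' - ctr a' b' c') ∈ out a' b' c')
    calc dist z (ctr a' b' c' + tv a' b' c' • (c' - ctr a' b' c'))
        ≤ dist z (ctr a b c) + dist (ctr a b c) (ctr a' b' c')
          + dist (ctr a' b' c') (ctr a' b' c' + tv a' b' c' • (c' - ctr a' b' c')) :=
          dist_triangle4 _ _ _ _
      _ ≤ 4 / 3 * (6 * d) + d + 4 / 3 * (10 * d) := by
          rw [dist_comm (ctr a' b' c')]
          have hmx2 : 4 / 3 * (min (dist a c) (dist b c) - dist a b) ≤ 4 / 3 * (6 * d) := by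
            linarith
          have hmy2 : 4 / 3 * (min (dist a' c') (dist b' c') - dist a' b') ≤ 4 / 3 * (10 * d) := by
            linarith
          linarith
      _ ≤ 23 * d := by linarith
  · intro z hz
    refine ⟨ctr a b c + tv a b c • (c - ctr a b c), by simp [out], ?_⟩
    have h1 := hy z hz
    have h2 := hx _ (by simp [out] : ctr a b c + tv a b c • (c - ctr a b c) ∈ out a b c)
    calc dist z (ctr a b c + tv a b c • (c - ctr a b c))
        ≤ dist z (ctr a' b' c') + dist (ctr a' b' c') (ctr a b c)
          + dist (ctr a b c) (ctr a b c + tv a b c • (c - ctr a b c)) :=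
          dist_triangle4 _ _ _ _
      _ ≤ 4 / 3 * (10 * d) + d + 4 / 3 * (6 * d) := by
          rw [dist_comm (ctr a b c) (ctr a b c + _), dist_comm (ctr a' b' c') (ctr a b c)]
          have hmx2 : 4 / 3 * (min (dist a c) (dist b c) - dist a b) ≤ 4 / 3 * (6 * d) := by
            linarith
          have hmy2 : 4 / 3 * (min (dist a' c') (dist b' c') - dist a' b') ≤ 4 / 3 * (10 * d) := by
            linarith
          linarith
      _ ≤ 23 * d := by linarith


lemma pair_encard_le (u v : X) : ({u, v} : Set X).encard ≤ 2 := by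
  apply le_trans (Set.encard_insert_le _ _)
  rw [Set.encard_singleton]; rfl

lemma three_distinct {u v w : X} (h : ({u, v, w} : Set X).encard = 3) :
    u ≠ v ∧ u ≠ w ∧ v ≠ w := by
  refine ⟨?_, ?_, ?_⟩
  · intro heq
    have he : ({u, v, w} : Set X) = {v, w} := by rw [heq, Set.insert_idem]
    rw [he] at h
    exact absurd (h ▸ pair_encard_le v w) (by decide)
  · intro heq
    have he : ({u, v, w} : Set X) = {u, v} := by
      rw [heq]; ext z; simp only [Set.mem_insert_iff, Set.mem_singleton_iff]; tauto
    rw [he] at h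
    exact absurd (h ▸ pair_encard_le u v) (by decide)
  · intro heq
    have he : ({u, v, w} : Set X) = {u, v} := by
      rw [heq]; ext z; simp only [Set.mem_insert_iff, Set.mem_singleton_iff]; tauto
    rw [he] at h
    exact absurd (h ▸ pair_encard_le u v) (by decide)

lemma dist_pert_ub {u v u' v' : X} {d : ℝ} (h1 : dist u u' ≤ d) (h2 : dist v v' ≤ d) :
    dist u' v' ≤ dist u v + 2 * d := by
  have := dist_triangle4 u' u v v'
  have hc : dist u' u = dist u u' := dist_comm _ _
  linarith

lemma dist_pert_lb {u v u' v' : X} {d : ℝ} (h1 : dist u u' ≤ d) (h2 : dist v v' ≤ d) :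
    dist u v - 2 * d ≤ dist u' v' := by
  have := dist_triangle4 u u' v' v
  have hc : dist v' v = dist v v' := dist_comm _ _
  linarith

lemma sorted_swap {a b c : X} (h : sorted a b c) : sorted b a c :=
  ⟨by rw [dist_comm]; exact h.2, by rw [dist_comm]; exact h.1⟩

lemma ctr_swap23 (a b c : X) : ctr a b c = ctr a c b := by simp only [ctr]; module


lemma out_finite (a b c : X) : (out a b c).Finite := by
  rw [out]
  exact (Set.finite_singleton _).insert _

lemma key {a b c a' b' c' : X} (h : sorted a b c) (h' : sorted a' b' c')
    (hord : max (dist a' c') (dist b' c') ≤ max (dist a c) (dist b c)) :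
    hausdorffDist (out a b c) (out a' b' c') ≤
      731 * hausdorffDist ({a, b, c} : Set X) ({a', b', c'} : Set X) := by
  set d := hausdorffDist ({a, b, c} : Set X) ({a', b', c'} : Set X) with hddef
  have hd0 : 0 ≤ d := hausdorffDist_nonneg
  have hxf : ({a, b, c} : Set X).Finite := Set.toFinite _
  have hyf : ({a', b', c'} : Set X).Finite := Set.toFinite _
  have hxne : ({a, b, c} : Set X).Nonempty := ⟨a, by simp⟩
  have hyne : ({a', b', c'} : Set X).Nonempty := ⟨a', by simp⟩
  rcases le_or_gt (max (dist a c) (dist b c)) (200 * d) with hA | hB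
  · -- Case A : far apart relative to size
    have t1 : hausdorffDist (out a b c) ({a, b, c} : Set X) ≤ max (dist a c) (dist b c) :=
      out_close h
    have t2 : hausdorffDist ({a', b', c'} : Set X) (out a' b' c') ≤
        max (dist a' c') (dist b' c') := by
      rw [hausdorffDist_comm]; exact out_close h'
    have f1 : EMetric.hausdorffEdist (out a b c) ({a, b, c} : Set X) ≠ ⊤ :=
      fin_ne_top (out_finite _ _ _) hxf (out_nonempty _ _ _) hxne
    have f2 : EMetric.hausdorffEdist ({a, b, c} : Set X) ({a', b', c'} : Set X) ≠ ⊤ :=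
      fin_ne_top hxf hyf hxne hyne
    have tri1 : hausdorffDist (out a b c) (out a' b' c') ≤
        hausdorffDist (out a b c) ({a, b, c} : Set X) +
          hausdorffDist ({a, b, c} : Set X) (out a' b' c') := hausdorffDist_triangle f1
    have tri2 : hausdorffDist ({a, b, c} : Set X) (out a' b' c') ≤
        d + hausdorffDist ({a', b', c'} : Set X) (out a' b' c') := hausdorffDist_triangle f2
    linarith
  · -- Case B : close configurations
    have hl0 : (0:ℝ) < max (dist a c) (dist b c) := by linarith
    have myh : ∀ v ∈ ({a', b', c'} : Set X), ∃ u ∈ ({a, b, c} : Set X), dist v u ≤ d := by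
      intro v hv
      obtain ⟨u, hu, hd'⟩ := exists_close hyf hxf hyne hxne hv
      exact ⟨u, hu, by rwa [hausdorffDist_comm] at hd'⟩
    obtain ⟨va, hva_mem, hva⟩ :=
      exists_close hxf hyf hxne hyne (show a ∈ ({a, b, c} : Set X) by simp)
    obtain ⟨vb, hvb_mem, hvb⟩ :=
      exists_close hxf hyf hxne hyne (show b ∈ ({a, b, c} : Set X) by simp)
    obtain ⟨vc, hvc_mem, hvc⟩ :=
      exists_close hxf hyf hxne hyne (show c ∈ ({a, b, c} : Set X) by simp)
    rw [← hddef] at hva hvb hvc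
    rcases le_or_gt (dist a b) (12 * d) with hii | hi
    · -- case (ii) : x is nearly a 2-set
      have htri1 : dist b c ≤ dist a b + dist a c := by
        rw [dist_comm a b]; exact dist_triangle b a c
      have htri2 : dist a c ≤ dist a b + dist b c := dist_triangle a b c
      have hminlb : max (dist a c) (dist b c) - dist a b ≤ min (dist a c) (dist b c) := by
        rw [le_min_iff]
        constructor
        · exact sub_le_iff_le_add.mpr (max_le (by linarith) (by linarith))
        · exact sub_le_iff_le_add.mpr (max_le (by linarith) (by linarith))
      have hacb : max (dist a c) (dist b c) - 12 * d ≤ dist a c := by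
        have := min_le_left (dist a c) (dist b c)
        linarith
      have ht1 : tv a b c = 1 := by
        apply tv_eq_one hl0
        linarith
      rw [out_of_t1 ht1]
      have hclass : ∀ v ∈ ({a', b', c'} : Set X), dist v a ≤ 13 * d ∨ dist v c ≤ d := by
        intro v hv
        obtain ⟨u, hu, hduv⟩ := myh v hv
        simp only [Set.mem_insert_iff, Set.mem_singleton_iff] at hu
        rcases hu with heq | heq | heq <;> rw [heq] at hduv
        · left; linarith
        · left
          calc dist v a ≤ dist v b + dist b a := dist_triangle _ _ _
            _ ≤ d + 12 * d := by rw [dist_comm b a]; exact add_le_add hduv hii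
            _ = 13 * d := by ring
        · right; exact hduv
      have hex : ∀ v : X, dist v a ≤ 13 * d → dist v c ≤ d → False := by
        intro v h1 h2
        have h3 : dist a c ≤ dist a v + dist v c := dist_triangle _ _ _
        rw [dist_comm a v] at h3
        linarith
      have ha' := hclass a' (by simp)
      have hb' := hclass b' (by simp)
      have hc' := hclass c' (by simp)
      simp only [Set.mem_insert_iff, Set.mem_singleton_iff] at hva_mem hvb_mem hvc_mem
      rcases ha' with ha1 | ha2 <;> rcases hb' with hb1 | hb2 <;> rcases hc' with hc1 | hc2
      -- (1,1,1) : impossible, c not covered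
      · exfalso
        rcases hvc_mem with heq | heq | heq <;> rw [heq] at hvc
        · exact hex a' ha1 (by rw [dist_comm]; exact hvc)
        · exact hex b' hb1 (by rw [dist_comm]; exact hvc)
        · exact hex c' hc1 (by rw [dist_comm]; exact hvc)
      -- (1,1,2) : a',b' near a ; c' near c : aligned
      · have e1 : dist a a' = dist a' a := dist_comm _ _
        have e2 : dist a b' = dist b' a := dist_comm _ _
        have hs' : dist a' b' ≤ 26 * d := by
          have h3 := dist_triangle a' a b'
          linarith
        have hac' : max (dist a c) (dist b c) - 26 * d ≤ dist a' c' := by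
          have h3 := dist_triangle4 a a' c' c
          linarith
        have hbc' : max (dist a c) (dist b c) - 26 * d ≤ dist b' c' := by
          have h3 := dist_triangle4 a b' c' c
          linarith
        have hly : (0:ℝ) < max (dist a' c') (dist b' c') := by
          have := le_max_left (dist a' c') (dist b' c')
          linarith
        have ht'1 : tv a' b' c' = 1 := by
          apply tv_eq_one hly
          have hm1 : max (dist a c) (dist b c) - 26 * d ≤ min (dist a' c') (dist b' c') :=
            le_min hac' hbc'
          linarith
        rw [out_of_t1 ht'1]
        have hmm : dist (mp a b) (mp a' b') ≤ 19 * d := by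
          have h1 := dist_mp_le a b a' b'
          have h3 : dist b b' ≤ 25 * d := by
            have h4 := dist_triangle b a b'
            have h5 : dist b a = dist a b := dist_comm _ _
            linarith
          linarith
        have hcc : dist c c' ≤ 19 * d := by
          have : dist c c' = dist c' c := dist_comm _ _
          linarith
        exact le_trans (hd_pair (by linarith) hmm hcc) (by linarith)
      -- (1,2,1) : contradiction with sortedness of y
      · exfalso
        have e1 : dist a a' = dist a' a := dist_comm _ _
        have e2 : dist a c' = dist c' a := dist_comm _ _
        have hlo : max (dist a c) (dist b c) - 26 * d ≤ dist a' b' := by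
          have h3 := dist_triangle4 a a' b' c
          linarith
        have hhi : dist a' c' ≤ 26 * d := by
          have h3 := dist_triangle a' a c'
          linarith
        linarith [h'.1]
      -- (1,2,2) : contradiction
      · exfalso
        have e1 : dist a a' = dist a' a := dist_comm _ _
        have e2 : dist c c' = dist c' c := dist_comm _ _
        have hlo : max (dist a c) (dist b c) - 26 * d ≤ dist a' b' := by
          have h3 := dist_triangle4 a a' b' c
          linarith
        have hhi : dist b' c' ≤ 2 * d := by
          have h3 := dist_triangle b' c c'
          linarith
        linarith [h'.2]
      -- (2,1,1) : contradiction
      · exfalso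
        have e1 : dist a b' = dist b' a := dist_comm _ _
        have e2 : dist b' a' = dist a' b' := dist_comm _ _
        have e3 : dist a c' = dist c' a := dist_comm _ _
        have hlo : max (dist a c) (dist b c) - 26 * d ≤ dist a' b' := by
          have h3 := dist_triangle4 a b' a' c
          linarith
        have hhi : dist b' c' ≤ 26 * d := by
          have h3 := dist_triangle b' a c'
          linarith
        linarith [h'.2]
      -- (2,1,2) : contradiction
      · exfalso
        have e1 : dist a b' = dist b' a := dist_comm _ _
        have e2 : dist b' a' = dist a' b' := dist_comm _ _
        have e3 : dist c c' = dist c' c := dist_comm _ _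
        have hlo : max (dist a c) (dist b c) - 26 * d ≤ dist a' b' := by
          have h3 := dist_triangle4 a b' a' c
          linarith
        have hhi : dist a' c' ≤ 2 * d := by
          have h3 := dist_triangle a' c c'
          linarith
        linarith [h'.1]
      -- (2,2,1) : a',b' near c ; c' near a : crossed
      · have e1 : dist a c' = dist c' a := dist_comm _ _
        have e2 : dist c' a' = dist a' c' := dist_comm _ _
        have e3 : dist c' b' = dist b' c' := dist_comm _ _
        have e4 : dist c b' = dist b' c := dist_comm _ _
        have hs' : dist a' b' ≤ 2 * d := by
          have h3 := dist_triangle a' c b'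
          linarith
        have hac' : max (dist a c) (dist b c) - 26 * d ≤ dist a' c' := by
          have h3 := dist_triangle4 a c' a' c
          linarith
        have hbc' : max (dist a c) (dist b c) - 26 * d ≤ dist b' c' := by
          have h3 := dist_triangle4 a c' b' c
          linarith
        have hly : (0:ℝ) < max (dist a' c') (dist b' c') := by
          have := le_max_left (dist a' c') (dist b' c')
          linarith
        have ht'1 : tv a' b' c' = 1 := by
          apply tv_eq_one hly
          have hm1 : max (dist a c) (dist b c) - 26 * d ≤ min (dist a' c') (dist b' c') :=
            le_min hac' hbc'
          linarith
        rw [out_of_t1 ht'1]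
        have hmc : dist (mp a b) c' ≤ 19 * d := by
          have h1 := dist_mp_left a b
          have h2 := dist_triangle (mp a b) a c'
          linarith
        have hcm : dist c (mp a' b') ≤ d := by
          rw [← mp_self c]
          have h1 := dist_mp_le c c a' b'
          have h2 : dist c a' ≤ d := by rw [dist_comm]; exact ha2
          have h3 : dist c b' ≤ d := by rw [dist_comm]; exact hb2
          linarith
        have hcm' : dist c (mp a' b') ≤ 19 * d := by linarith
        exact le_trans (hd_pair_cross (by linarith) hmc hcm') (by linarith)
      -- (2,2,2) : impossible, a not covered
      · exfalso
        rcases hva_mem with heq | heq | heq <;> rw [heq] at hva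
        · exact hex a' (by rw [dist_comm] at hva; linarith) ha2
        · exact hex b' (by rw [dist_comm] at hva; linarith) hb2
        · exact hex c' (by rw [dist_comm] at hva; linarith) hc2
    · -- case (i) : genuine 3-set, bijective matching
      have uab : dist va vb ≤ dist a b + 2 * d := dist_pert_ub hva hvb
      have lab : dist a b - 2 * d ≤ dist va vb := dist_pert_lb hva hvb
      have uac : dist va vc ≤ dist a c + 2 * d := dist_pert_ub hva hvc
      have lac : dist a c - 2 * d ≤ dist va vc := dist_pert_lb hva hvc
      have ubc : dist vb vc ≤ dist b c + 2 * d := dist_pert_ub hvb hvc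
      have lbc : dist b c - 2 * d ≤ dist vb vc := dist_pert_lb hvb hvc
      have hsac : dist a b ≤ dist a c := h.1
      have hsbc : dist a b ≤ dist b c := h.2
      have hvab_ne : va ≠ vb := by
        intro heq
        rw [heq, dist_self] at lab
        linarith
      have hvac_ne : va ≠ vc := by
        intro heq
        rw [heq, dist_self] at lac
        linarith
      have hvbc_ne : vb ≠ vc := by
        intro heq
        rw [heq, dist_self] at lbc
        linarith
      have hsub : ({va, vb, vc} : Set X) ⊆ {a', b', c'} := by
        intro z hz
        simp only [Set.mem_insert_iff, Set.mem_singleton_iff] at hz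
        rcases hz with rfl | rfl | rfl
        exacts [hva_mem, hvb_mem, hvc_mem]
      have hyeq : ({va, vb, vc} : Set X) = {a', b', c'} := by
        apply Set.Finite.eq_of_subset_of_encard_le' hyf hsub
        rw [encard_triple_eq_three hvab_ne hvac_ne hvbc_ne]
        exact encard_le_three _ _ _
      have h3' : ({a', b', c'} : Set X).encard = 3 := by
        rw [← hyeq]
        exact encard_triple_eq_three hvab_ne hvac_ne hvbc_ne
      obtain ⟨hab'', hac'', hbc''⟩ := three_distinct h3'
      have ham : a' ∈ ({va, vb, vc} : Set X) := by rw [hyeq]; simp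
      have hbm : b' ∈ ({va, vb, vc} : Set X) := by rw [hyeq]; simp
      have hcm : c' ∈ ({va, vb, vc} : Set X) := by rw [hyeq]; simp
      simp only [Set.mem_insert_iff, Set.mem_singleton_iff] at ham hbm hcm
      have hminle : min (dist a c) (dist b c) ≤ dist a c := min_le_left _ _
      have hminle' : min (dist a c) (dist b c) ≤ dist b c := min_le_right _ _
      have hGG0 : dist (ctr a b c) (ctr va vb vc) ≤ d :=
        le_trans (dist_ctr_le a b c va vb vc) (by linarith)
      rcases ham with heqa | heqa | heqa
      · rcases hbm with heqb | heqb | heqb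
        · exact absurd (heqa.trans heqb.symm) hab''
        · rcases hcm with heqc | heqc | heqc
          · exact absurd (heqa.trans heqc.symm) hac''
          · exact absurd (heqb.trans heqc.symm) hbc''
          · -- (va, vb, vc) : aligned
            rw [heqa, heqb, heqc] at h' ⊢
            exact le_trans (core h h' hB hva hvb hvc) (by linarith)
        · rcases hcm with heqc | heqc | heqc
          · exact absurd (heqa.trans heqc.symm) hac''
          · -- (va, vc, vb)
            rw [heqa, heqb, heqc] at h' ⊢
            have hmx : min (dist a c) (dist b c) - dist a b ≤ 6 * d := by
              have h1 := h'.1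
              linarith
            have hmy : min (dist va vb) (dist vc vb) - dist va vc ≤ 10 * d := by
              have h1 : min (dist va vb) (dist vc vb) ≤ dist va vb := min_le_left _ _
              linarith
            have hly : (0:ℝ) < max (dist va vb) (dist vc vb) :=
              lt_of_lt_of_le (dist_pos.mpr hvab_ne) (le_max_left _ _)
            have hGG : dist (ctr a b c) (ctr va vc vb) ≤ d := by
              rw [← ctr_swap23 va vb vc]; exact hGG0
            exact le_trans (ib_case h h' hd0 hl0 hly hGG hmx hmy) (by linarith)
          · exact absurd (heqb.trans heqc.symm) hbc''
      · rcases hbm with heqb | heqb | heqb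
        · rcases hcm with heqc | heqc | heqc
          · exact absurd (heqb.trans heqc.symm) hbc''
          · exact absurd (heqa.trans heqc.symm) hac''
          · -- (vb, va, vc) : aligned after swapping a,b
            rw [heqa, heqb, heqc] at h' ⊢
            rw [out_comm a b c]
            have hswap : sorted b a c := sorted_swap h
            have hB' : 200 * d < max (dist b c) (dist a c) := by
              rw [max_comm (dist b c) (dist a c)]; exact hB
            exact le_trans (core hswap h' hB' hvb hva hvc) (by linarith)
        · exact absurd (heqa.trans heqb.symm) hab''
        · rcases hcm with heqc | heqc | heqc
          · -- (vb, vc, va)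
            rw [heqa, heqb, heqc] at h' ⊢
            have c1 : dist vb va = dist va vb := dist_comm _ _
            have hmx : min (dist a c) (dist b c) - dist a b ≤ 6 * d := by
              have h1 := h'.1
              linarith
            have hmy : min (dist vb va) (dist vc va) - dist vb vc ≤ 10 * d := by
              have h1 : min (dist vb va) (dist vc va) ≤ dist vb va := min_le_left _ _
              linarith
            have hly : (0:ℝ) < max (dist vb va) (dist vc va) :=
              lt_of_lt_of_le (dist_pos.mpr (Ne.symm hvab_ne)) (le_max_left _ _)
            have hGG : dist (ctr a b c) (ctr vb vc va) ≤ d := by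
              rw [(ctr_rot va vb vc).symm]; exact hGG0
            exact le_trans (ib_case h h' hd0 hl0 hly hGG hmx hmy) (by linarith)
          · exact absurd (heqa.trans heqc.symm) hac''
          · exact absurd (heqb.trans heqc.symm) hbc''
      · rcases hbm with heqb | heqb | heqb
        · rcases hcm with heqc | heqc | heqc
          · exact absurd (heqb.trans heqc.symm) hbc''
          · -- (vc, va, vb)
            rw [heqa, heqb, heqc] at h' ⊢
            have c1 : dist vc va = dist va vc := dist_comm _ _
            have hmx : min (dist a c) (dist b c) - dist a b ≤ 6 * d := by
              have h1 := h'.2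
              linarith
            have hmy : min (dist vc vb) (dist va vb) - dist vc va ≤ 10 * d := by
              have h1 : min (dist vc vb) (dist va vb) ≤ dist va vb := min_le_right _ _
              linarith
            have hly : (0:ℝ) < max (dist vc vb) (dist va vb) :=
              lt_of_lt_of_le (dist_pos.mpr hvab_ne) (le_max_right _ _)
            have hGG : dist (ctr a b c) (ctr vc va vb) ≤ d := by
              rw [ctr_rot vc va vb]; exact hGG0
            exact le_trans (ib_case h h' hd0 hl0 hly hGG hmx hmy) (by linarith)
          · exact absurd (heqa.trans heqc.symm) hac''
        · rcases hcm with heqc | heqc | heqc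
          · -- (vc, vb, va)
            rw [heqa, heqb, heqc] at h' ⊢
            have c1 : dist vc vb = dist vb vc := dist_comm _ _
            have c2 : dist vb va = dist va vb := dist_comm _ _
            have hmx : min (dist a c) (dist b c) - dist a b ≤ 6 * d := by
              have h1 := h'.2
              linarith
            have hmy : min (dist vc va) (dist vb va) - dist vc vb ≤ 10 * d := by
              have h1 : min (dist vc va) (dist vb va) ≤ dist vb va := min_le_right _ _
              linarith
            have hly : (0:ℝ) < max (dist vc va) (dist vb va) :=
              lt_of_lt_of_le (dist_pos.mpr (Ne.symm hvab_ne)) (le_max_right _ _)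
            have hGG : dist (ctr a b c) (ctr vc vb va) ≤ d := by
              rw [(ctr_swap23 vc vb va).trans (ctr_rot vc va vb)]; exact hGG0
            exact le_trans (ib_case h h' hd0 hl0 hly hGG hmx hmy) (by linarith)
          · exact absurd (heqb.trans heqc.symm) hbc''
          · exact absurd (heqa.trans heqc.symm) hac''
        · exact absurd (heqa.trans heqb.symm) hab''


lemma encard_le_two_of {x : Set X} (h3 : x.encard ≤ 3) (h : x.encard ≠ 3) : x.encard ≤ 2 := by
  have hne3 : x.encard ≠ ⊤ := ne_top_of_le_ne_top (by decide) h3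
  lift x.encard to ℕ using hne3 with n hn
  rcases h3.lt_or_eq with hlt | heq
  · exact_mod_cast Order.le_of_lt_add_one (by exact_mod_cast hlt)
  · exact absurd heq h

end Stmt7

open Stmt7 in
/-- For any normed space `X` there is a Lipschitz retraction `X(3) → X(2)` with
Lipschitz constant `731`. -/
theorem stmt_7 {X : Type*} [NormedAddCommGroup X] [NormedSpace ℝ X] :
    ∃ r : Set X → Set X,
      (∀ x : Set X, x.Nonempty → x.encard ≤ 3 → (r x).Nonempty ∧ (r x).encard ≤ 2) ∧
      (∀ x : Set X, x.Nonempty → x.encard ≤ 2 → r x = x) ∧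
      (∀ x y : Set X, x.Nonempty → x.encard ≤ 3 → y.Nonempty → y.encard ≤ 3 →
        Metric.hausdorffDist (r x) (r y) ≤ 731 * Metric.hausdorffDist x y) := by
  refine ⟨rmap, ?_, ?_, ?_⟩
  · intro x hne h3
    rcases eq_or_ne x.encard 3 with h | h
    · rw [rmap, dif_pos h]
      exact ⟨out_nonempty _ _ _, out_encard _ _ _⟩
    · have hle := encard_le_two_of h3 h
      rw [rmap_eq_self hle]
      exact ⟨hne, hle⟩
  · intro x hne h2
    exact rmap_eq_self h2
  · intro x y hxne hx3 hyne hy3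
    obtain ⟨a, b, c, hxeq, hs, hrx⟩ := rmap_spec hxne hx3
    obtain ⟨a', b', c', hyeq, hs', hry⟩ := rmap_spec hyne hy3
    rw [hrx, hry, hxeq, hyeq]
    rcases le_total (max (dist a' c') (dist b' c')) (max (dist a c) (dist b c)) with hord | hord
    · exact key hs hs' hord
    · rw [Metric.hausdorffDist_comm (s := out a b c), Metric.hausdorffDist_comm (s := ({a, b, c} : Set X))]
      exact key hs' hs hord
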